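/- Let n ≥ 2 and let 𝔤 = su(n+1) = {A ∈ ℂ^{(n+1)×(n+1)} : Aᴴ = −A, tr(A) = 0} with bracket the matrix commutator and invariant inner product ⟨A,B⟩ = −Re(tr(A·B)). Let 𝔥 = {diag(C, 0) : C ∈ ℂ^{n×n}, Cᴴ = −C, tr(C) = 0} (su(n) embedded in the upper-left block), let 𝔪 = 𝔥^⊥, pr_𝔪 the orthogonal projection onto 𝔪, and 𝔪₀ = {v ∈ 𝔪 : ⁅w,v⁆ = 0 for all w ∈ 𝔥} (explicitly, 𝔪₀ = ℝ·diag(i,…,i,−n·i), the real line spanned by the diagonal matrix with n entries equal to i and last entry −n·i). Then the set of Randers equigeodesic vectors contained in 𝔪 is exactly 𝔪₀ \ {0}. -/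

import Mathlib

open Matrix

attribute [local instance 100] LieRing.ofAssociativeRing

/-- The invariant inner product `⟨A,B⟩ = −Re(tr(A·B))` on complex matrices. -/
noncomputable def ipC (n : ℕ) (A B : Matrix (Fin (n + 1)) (Fin (n + 1)) ℂ) : ℝ :=
  -((A * B).trace).re

/-- An invariant inner product on the subspace `𝔪` of the Lie algebra `L`, encoded as a
bilinear form on `L` which is symmetric and positive definite on `𝔪`, and `ad 𝔥`-invariant
on `𝔪`. -/
def IsInvariantInnerOn {L : Type*} [LieRing L] [LieAlgebra ℝ L]
    (𝔥 𝔪 : Submodule ℝ L) (α : L →ₗ[ℝ] L →ₗ[ℝ] ℝ) : Prop :=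
  (∀ u ∈ 𝔪, ∀ v ∈ 𝔪, α u v = α v u) ∧
  (∀ u ∈ 𝔪, u ≠ 0 → 0 < α u u) ∧
  (∀ w ∈ 𝔥, ∀ u ∈ 𝔪, ∀ v ∈ 𝔪, α ⁅w, u⁆ v + α u ⁅w, v⁆ = 0)

/-- `X` is a Randers equigeodesic vector: the geodesic-vector criterion
`α(pr_𝔪 ⁅X,Z⁆, X) + √(α(X,X))·α(pr_𝔪 ⁅X,Z⁆, u) = 0` for every invariant inner product
`α` on `𝔪`, every `u ∈ 𝔪₀` with `α(u,u) < 1`, and every `Z ∈ 𝔪`. -/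
def IsRandersEquigeodesicVector {L : Type*} [LieRing L] [LieAlgebra ℝ L]
    (𝔥 𝔪 𝔪₀ : Submodule ℝ L) (pr : L →ₗ[ℝ] L) (X : L) : Prop :=
  ∀ α : L →ₗ[ℝ] L →ₗ[ℝ] ℝ, IsInvariantInnerOn 𝔥 𝔪 α →
    ∀ u ∈ 𝔪₀, α u u < 1 →
      ∀ Z ∈ 𝔪, α (pr ⁅X, Z⁆) X + Real.sqrt (α X X) * α (pr ⁅X, Z⁆) u = 0

namespace RAux
open Matrix Complex Finset
variable {n : ℕ}
abbrev M (n : ℕ) := Matrix (Fin (n+1)) (Fin (n+1)) ℂ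

lemma trace_mul_expand (A B : M n) : (A * B).trace = ∑ p, ∑ q, A p q * B q p := by
  simp [Matrix.trace, Matrix.diag, Matrix.mul_apply]

lemma ipC_eq (A B : M n) : ipC n A B = -(∑ p, ∑ q, A p q * B q p).re := by
  rw [ipC, trace_mul_expand]

lemma ipC_symm (A B : M n) : ipC n A B = ipC n B A := by
  rw [ipC, ipC, Matrix.trace_mul_comm]

lemma skew_apply {A : M n} (hA : Aᴴ = -A) (p q : Fin (n+1)) :
    A q p = -(starRingEnd ℂ) (A p q) := by
  have h := congrFun (congrFun hA q) p
  simp only [Matrix.conjTranspose_apply, Matrix.neg_apply] at h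
  rw [show ((starRingEnd ℂ) (A p q)) = star (A p q) from rfl, h, neg_neg]

lemma ipC_self {A : M n} (hA : Aᴴ = -A) :
    ipC n A A = ∑ p, ∑ q, Complex.normSq (A p q) := by
  rw [ipC_eq]
  have h : ∀ p q : Fin (n+1), A p q * A q p = -((Complex.normSq (A p q) : ℂ)) := by
    intro p q; rw [skew_apply hA p q, mul_neg, Complex.mul_conj]
  simp only [h]
  push_cast
  simp [Complex.re_sum]

lemma ipC_self_nonneg {A : M n} (hA : Aᴴ = -A) : 0 ≤ ipC n A A := by
  rw [ipC_self hA]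
  exact Finset.sum_nonneg fun _ _ => Finset.sum_nonneg fun _ _ => Complex.normSq_nonneg _

lemma eq_zero_of_ipC_self {A : M n} (hA : Aᴴ = -A) (h : ipC n A A = 0) : A = 0 := by
  rw [ipC_self hA] at h
  ext p q
  have h1 : ∀ p ∈ Finset.univ, (0:ℝ) ≤ ∑ q, Complex.normSq (A p q) :=
    fun p _ => Finset.sum_nonneg fun _ _ => Complex.normSq_nonneg _
  have h2 := (Finset.sum_eq_zero_iff_of_nonneg h1).mp h p (Finset.mem_univ p)
  have h3 : ∀ q ∈ Finset.univ, (0:ℝ) ≤ Complex.normSq (A p q) :=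
    fun q _ => Complex.normSq_nonneg _
  have h4 := (Finset.sum_eq_zero_iff_of_nonneg h3).mp h2 q (Finset.mem_univ q)
  simpa using Complex.normSq_eq_zero.mp h4

lemma lie_conjT {A B : M n} (hA : Aᴴ = -A) (hB : Bᴴ = -B) : ⁅A,B⁆ᴴ = -⁅A,B⁆ := by
  rw [Ring.lie_def, Matrix.conjTranspose_sub, Matrix.conjTranspose_mul, Matrix.conjTranspose_mul,
    hA, hB]
  simp [Matrix.neg_mul, Matrix.mul_neg]

lemma trace_lie (A B : M n) : (⁅A,B⁆ : M n).trace = 0 := by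
  rw [Ring.lie_def, Matrix.trace_sub, Matrix.trace_mul_comm]
  ring

lemma trace_lie_mul (A B C : M n) : ((⁅A,B⁆ : M n) * C).trace = (B * ⁅C,A⁆).trace := by
  simp only [Ring.lie_def, Matrix.sub_mul, Matrix.mul_sub, Matrix.trace_sub]
  rw [← Matrix.mul_assoc, ← Matrix.mul_assoc, Matrix.trace_mul_cycle B C A]

lemma ipC_lie (A B C : M n) : ipC n ⁅A,B⁆ C = ipC n B ⁅C,A⁆ := by
  rw [ipC, ipC, trace_lie_mul]

lemma ipC_neg_right (A B : M n) : ipC n A (-B) = -ipC n A B := by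
  rw [ipC, ipC, Matrix.mul_neg, Matrix.trace_neg]
  simp

lemma ipC_invariant (w u v : M n) : ipC n ⁅w,u⁆ v + ipC n u ⁅w,v⁆ = 0 := by
  rw [ipC_lie, ← lie_skew w v, ipC_neg_right]
  ring


noncomputable def alpha0 (n : ℕ) : M n →ₗ[ℝ] M n →ₗ[ℝ] ℝ :=
  LinearMap.mk₂ ℝ (fun A B => ipC n A B)
    (fun A A' B => by simp [ipC, Matrix.add_mul]; ring)
    (fun r A B => by simp [ipC, Matrix.smul_mul, Complex.smul_re])
    (fun A B B' => by simp [ipC, Matrix.mul_add]; ring)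
    (fun r A B => by simp [ipC, Matrix.mul_smul, Complex.smul_re])

@[simp] lemma alpha0_apply (A B : M n) : alpha0 n A B = ipC n A B := rfl

lemma sum_last_split (f : Fin (n+1) → ℂ) :
    ∑ p, f p = f (Fin.last n) + ∑ p, (if p = Fin.last n then 0 else f p) := by
  calc ∑ p, f p
      = ∑ p, ((if p = Fin.last n then f p else 0) + (if p = Fin.last n then 0 else f p)) :=
        Finset.sum_congr rfl (fun p _ => by by_cases h : p = Fin.last n <;> simp [h])
    _ = _ := by
        rw [Finset.sum_add_distrib, Finset.sum_ite_eq' Finset.univ (Fin.last n) f]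
        simp

lemma sum_const_off_last (c : ℂ) :
    ∑ p : Fin (n+1), (if p = Fin.last n then 0 else c) = n * c := by
  have h : ∀ p : Fin (n+1), (if p = Fin.last n then (0:ℂ) else c)
      = c - (if p = Fin.last n then c else 0) := by
    intro p; by_cases h : p = Fin.last n <;> simp [h]
  simp only [h, Finset.sum_sub_distrib, Finset.sum_const, Finset.card_univ, Fintype.card_fin,
    Finset.sum_ite_eq' Finset.univ, Finset.mem_univ, if_true]
  ring

/-- The central direction `i·diag(1,…,1,−n)`. -/
noncomputable def Dm (n : ℕ) : M n :=
  Matrix.diagonal (fun p => if p = Fin.last n then -(n:ℂ) * Complex.I else Complex.I)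

lemma Dm_conjT : (Dm n)ᴴ = -(Dm n) := by
  ext p q
  by_cases h : p = q
  · subst h
    by_cases hl : p = Fin.last n <;>
      simp [Dm, Matrix.conjTranspose_apply, Matrix.diagonal_apply_eq, hl]
  · simp [Dm, Matrix.conjTranspose_apply, Matrix.diagonal_apply, h, Ne.symm h]

lemma Dm_trace : (Dm n).trace = 0 := by
  rw [Dm, Matrix.trace_diagonal, sum_last_split]
  simp only [if_pos rfl]
  have h : ∀ p : Fin (n+1), (if p = Fin.last n then (0:ℂ)
        else if p = Fin.last n then -(n:ℂ) * Complex.I else Complex.I)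
      = (if p = Fin.last n then 0 else Complex.I) := by
    intro p; by_cases h : p = Fin.last n <;> simp [h]
  rw [Finset.sum_congr rfl (fun p _ => h p), sum_const_off_last]
  simp only [if_true]
  ring


lemma sum_mul_conj (v : Fin (n+1) → ℂ) :
    ∑ r, v r * (starRingEnd ℂ) (v r) = ((∑ r, Complex.normSq (v r) : ℝ) : ℂ) := by
  push_cast
  exact Finset.sum_congr rfl fun r _ => Complex.mul_conj _


lemma sum_conj_mul (v : Fin (n+1) → ℂ) :
    ∑ r, (starRingEnd ℂ) (v r) * v r = ((∑ r, Complex.normSq (v r) : ℝ) : ℂ) := by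
  push_cast
  exact Finset.sum_congr rfl fun r _ => by rw [mul_comm, Complex.mul_conj]

noncomputable def wB (n : ℕ) (v : Fin (n+1) → ℂ) : M n :=
  Matrix.of fun p q =>
    Complex.I * (v p * (starRingEnd ℂ) (v q)) -
      (if p = q then
        (if p = Fin.last n then 0
          else Complex.I * ((∑ r, Complex.normSq (v r) : ℝ) : ℂ) / n) else 0)

lemma wB_row_last (v : Fin (n+1) → ℂ) (hv : v (Fin.last n) = 0) (p : Fin (n+1)) :
    wB n v (Fin.last n) p = 0 := by
  by_cases h : Fin.last n = p
  · subst h; simp [wB, hv]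
  · simp [wB, hv, h]

lemma wB_col_last (v : Fin (n+1) → ℂ) (hv : v (Fin.last n) = 0) (p : Fin (n+1)) :
    wB n v p (Fin.last n) = 0 := by
  by_cases h : p = Fin.last n <;> simp [wB, hv, h]

lemma wB_mul_v (v : Fin (n+1) → ℂ) {p : Fin (n+1)} (hp : p ≠ Fin.last n) :
    ∑ r, wB n v p r * v r =
      Complex.I * ((∑ r, Complex.normSq (v r) : ℝ) : ℂ) * v p
        - Complex.I * ((∑ r, Complex.normSq (v r) : ℝ) : ℂ) / n * v p := by
  simp only [wB, Matrix.of_apply, sub_mul, ite_mul, zero_mul]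
  rw [Finset.sum_sub_distrib]
  congr 1
  · rw [Finset.sum_congr rfl (fun r _ => show Complex.I * (v p * (starRingEnd ℂ) (v r)) * v r
        = (Complex.I * v p) * ((starRingEnd ℂ) (v r) * v r) by ring), ← Finset.mul_sum,
      sum_conj_mul]
    ring
  · rw [Finset.sum_eq_single p (fun b _ hb => by simp [Ne.symm hb]) (by simp)]
    simp [hp]

lemma v_mul_wB (v : Fin (n+1) → ℂ) {q : Fin (n+1)} (hq : q ≠ Fin.last n) :
    ∑ r, (starRingEnd ℂ) (v r) * wB n v r q =
      Complex.I * ((∑ r, Complex.normSq (v r) : ℝ) : ℂ) * (starRingEnd ℂ) (v q)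
        - Complex.I * ((∑ r, Complex.normSq (v r) : ℝ) : ℂ) / n * (starRingEnd ℂ) (v q) := by
  simp only [wB, Matrix.of_apply, mul_sub, mul_ite, mul_zero]
  rw [Finset.sum_sub_distrib]
  congr 1
  · rw [Finset.sum_congr rfl (fun r _ => show
        (starRingEnd ℂ) (v r) * (Complex.I * (v r * (starRingEnd ℂ) (v q)))
        = (Complex.I * (starRingEnd ℂ) (v q)) * ((starRingEnd ℂ) (v r) * v r) by ring),
      ← Finset.mul_sum, sum_conj_mul]
    ring
  · rw [Finset.sum_eq_single q (fun b _ hb => by simp [hb]) (by simp)]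
    rw [if_pos (rfl : q = q)]
    rw [if_neg hq]
    ring

/-- The element of `𝔪` that `ad(wB)` sends onto the border matrix `B`. -/
noncomputable def Bp (n : ℕ) (c : ℝ) (B : M n) : M n :=
  Matrix.of fun p q =>
    if q = Fin.last n then (-Complex.I / (c:ℂ)) * B p q
    else if p = Fin.last n then (Complex.I / (c:ℂ)) * B p q else 0

lemma Bp_col (c : ℝ) (B : M n) (r : Fin (n+1)) :
    Bp n c B r (Fin.last n) = (-Complex.I / (c:ℂ)) * B r (Fin.last n) := by
  simp [Bp]

lemma Bp_row (c : ℝ) (B : M n) (hBcorner : B (Fin.last n) (Fin.last n) = 0) (r : Fin (n+1)) :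
    Bp n c B (Fin.last n) r = (Complex.I / (c:ℂ)) * B (Fin.last n) r := by
  by_cases h : r = Fin.last n
  · subst h; simp [Bp, hBcorner]
  · simp [Bp, h]

lemma Bp_off (c : ℝ) (B : M n) {p q : Fin (n+1)} (hp : p ≠ Fin.last n) (hq : q ≠ Fin.last n) :
    Bp n c B p q = 0 := by
  simp [Bp, hp, hq]

lemma negI_div_mul (c a : ℂ) (hc : c ≠ 0) : (-Complex.I/c) * (Complex.I * c * a) = a := by
  field_simp
  linear_combination (-a) * Complex.I_sq

lemma I_div_mul (c a : ℂ) (hc : c ≠ 0) : (Complex.I/c) * (-(Complex.I * c * a)) = a := by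
  field_simp
  linear_combination (-a) * Complex.I_sq

lemma lie_wB_Bp (hn : 2 ≤ n) {B : M n} (hBskew : Bᴴ = -B)
    (hBoff : ∀ p q, p ≠ Fin.last n → q ≠ Fin.last n → B p q = 0)
    (hBcorner : B (Fin.last n) (Fin.last n) = 0)
    (hs : (∑ r, Complex.normSq (B r (Fin.last n))) ≠ 0) :
    ⁅wB n (fun p => B p (Fin.last n)),
      Bp n ((∑ r, Complex.normSq (B r (Fin.last n))) * ((n:ℝ)-1) / n) B⁆ = B := by
  have hn0 : (n:ℝ) ≠ 0 := Nat.cast_ne_zero.mpr (by omega)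
  have hn0C : (n:ℂ) ≠ 0 := Nat.cast_ne_zero.mpr (by omega)
  have hn1 : (n:ℝ) - 1 ≠ 0 := by
    have : (2:ℝ) ≤ n := by exact_mod_cast hn
    linarith
  set l := Fin.last n with hl
  set v : Fin (n+1) → ℂ := fun p => B p l with hv
  set s : ℝ := ∑ r, Complex.normSq (v r) with hsdef
  set c : ℝ := s * ((n:ℝ)-1) / n with hcdef
  have hvl : v l = 0 := hBcorner
  have hcC : ((c:ℝ):ℂ) = (s:ℂ) - (s:ℂ)/(n:ℂ) := by
    rw [hcdef]
    push_cast
    field_simp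
  have hc0 : ((c:ℝ):ℂ) ≠ 0 := by
    rw [Complex.ofReal_ne_zero, hcdef]
    exact div_ne_zero (mul_ne_zero hs hn1) hn0
  have key1 : ∀ p, p ≠ l → ∑ r, wB n v p r * v r = Complex.I * ((c:ℝ):ℂ) * v p := by
    intro p hp
    rw [wB_mul_v v hp, ← hsdef, hcC]
    ring
  have key2 : ∀ q, q ≠ l → ∑ r, (starRingEnd ℂ) (v r) * wB n v r q
      = Complex.I * ((c:ℝ):ℂ) * (starRingEnd ℂ) (v q) := by
    intro q hq
    rw [v_mul_wB v hq, ← hsdef, hcC]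
    ring
  ext p q
  rw [Ring.lie_def, Matrix.sub_apply, Matrix.mul_apply, Matrix.mul_apply]
  by_cases hq : q = l
  · subst hq
    have h2 : ∑ r, Bp n c B p r * wB n v r l = 0 :=
      Finset.sum_eq_zero fun r _ => by rw [wB_col_last v hvl r, mul_zero]
    rw [h2, sub_zero]
    have h1 : ∀ r, wB n v p r * Bp n c B r l = (-Complex.I/((c:ℝ):ℂ)) * (wB n v p r * v r) := by
      intro r
      rw [Bp_col]
      ring
    rw [Finset.sum_congr rfl (fun r _ => h1 r), ← Finset.mul_sum]
    by_cases hp : p = l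
    · subst hp
      rw [Finset.sum_eq_zero fun r _ => by rw [wB_row_last v hvl r, zero_mul]]
      rw [mul_zero]
      exact hBcorner.symm
    · rw [key1 p hp]
      exact negI_div_mul _ _ hc0
  · have h1 : ∑ r, wB n v p r * Bp n c B r q = 0 := by
      apply Finset.sum_eq_zero
      intro r _
      by_cases hr : r = l
      · subst hr
        rw [wB_col_last v hvl p, zero_mul]
      · rw [Bp_off c B hr hq, mul_zero]
    rw [h1, zero_sub]
    by_cases hp : p = l
    · subst hp
      have h3 : ∀ r, Bp n c B l r * wB n v r q
          = (Complex.I/((c:ℝ):ℂ)) * (-((starRingEnd ℂ) (v r) * wB n v r q)) := by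
        intro r
        rw [Bp_row c B hBcorner r, skew_apply hBskew r l]
        ring
      rw [Finset.sum_congr rfl (fun r _ => h3 r), ← Finset.mul_sum, Finset.sum_neg_distrib,
        key2 q hq, I_div_mul _ _ hc0, skew_apply hBskew q l]
    · have h2 : ∑ r, Bp n c B p r * wB n v r q = 0 := by
        apply Finset.sum_eq_zero
        intro r _
        by_cases hr : r = l
        · subst hr
          rw [wB_row_last v hvl q, mul_zero]
        · rw [Bp_off c B hp hr, zero_mul]
      rw [h2, hBoff p q hp hq]
      simp


lemma wB_conjT (v : Fin (n+1) → ℂ) : (wB n v)ᴴ = -(wB n v) := by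
  ext p q
  simp only [Matrix.conjTranspose_apply, Matrix.neg_apply, wB, Matrix.of_apply]
  by_cases h : p = q
  · subst h
    by_cases hl : p = Fin.last n <;>
      simp [hl, _root_.map_mul, map_sub, map_div₀, Complex.conj_I, Complex.conj_ofReal] <;> ring
  · simp [h, Ne.symm h, _root_.map_mul, Complex.conj_I]
    ring

lemma wB_trace (hn : 2 ≤ n) (v : Fin (n+1) → ℂ) : (wB n v).trace = 0 := by
  have hn0 : (n:ℂ) ≠ 0 := by
    exact_mod_cast Nat.cast_ne_zero.mpr (by omega)
  rw [Matrix.trace]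
  simp only [Matrix.diag_apply, wB, Matrix.of_apply, eq_self_iff_true, if_true]
  rw [Finset.sum_sub_distrib]
  rw [Finset.sum_congr rfl (fun r _ => show
      Complex.I * (v r * (starRingEnd ℂ) (v r)) = Complex.I * (v r * (starRingEnd ℂ) (v r))
      from rfl), ← Finset.mul_sum, sum_mul_conj, sum_const_off_last]
  field_simp
  ring


lemma ipC_zero_of_offdiag {A W : M n} (hA : ∀ p q, p ≠ Fin.last n → q ≠ Fin.last n → A p q = 0)
    (hW : ∀ p, W p (Fin.last n) = 0 ∧ W (Fin.last n) p = 0) : ipC n A W = 0 := by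
  have h : (A * W).trace = 0 := by
    rw [Matrix.trace]
    apply Finset.sum_eq_zero
    intro p _
    rw [Matrix.diag_apply, Matrix.mul_apply]
    apply Finset.sum_eq_zero
    intro q _
    by_cases hq : q = Fin.last n
    · rw [hq, (hW p).2, mul_zero]
    · by_cases hp : p = Fin.last n
      · rw [hp, (hW q).1, mul_zero]
      · rw [hA p q hp hq, zero_mul]
  rw [ipC, h]
  simp

lemma ipC_zero_right (A : M n) : ipC n A 0 = 0 := by simp [ipC]



/-- The traceless part of the upper-left block of `X`, embedded in `𝔥`. -/
noncomputable def Wm (n : ℕ) (X : M n) : M n :=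
  Matrix.of fun p q =>
    if p = Fin.last n ∨ q = Fin.last n then 0
    else (X p q - if p = q then -(X (Fin.last n) (Fin.last n))/n else 0)

lemma Wm_border (X : M n) (p : Fin (n+1)) :
    Wm n X p (Fin.last n) = 0 ∧ Wm n X (Fin.last n) p = 0 := by
  constructor <;> simp [Wm]

lemma Wm_conjT {X : M n} (hXskew : Xᴴ = -X) : (Wm n X)ᴴ = -(Wm n X) := by
  have h := skew_apply hXskew (Fin.last n) (Fin.last n)
  have hdiag : (starRingEnd ℂ) (X (Fin.last n) (Fin.last n))
      = -(X (Fin.last n) (Fin.last n)) := by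
    conv_rhs => rw [h]
    simp
  ext p q
  simp only [Matrix.conjTranspose_apply, Matrix.neg_apply, Wm, Matrix.of_apply]
  by_cases hp : p = Fin.last n
  · simp [hp]
  · by_cases hq : q = Fin.last n
    · simp [hq]
    · simp only [hp, hq, or_self, if_false]
      have hqp : (starRingEnd ℂ) (X q p) = -(X p q) := by
        rw [skew_apply hXskew q p]
        simp
      rw [show star (X q p - if q = p then -X (Fin.last n) (Fin.last n) / (n:ℂ) else 0)
          = (starRingEnd ℂ) (X q p)
            - (starRingEnd ℂ) (if q = p then -X (Fin.last n) (Fin.last n) / (n:ℂ) else 0)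
          from map_sub (starRingEnd ℂ) _ _, hqp]
      by_cases hpq : p = q
      · subst hpq
        simp only [eq_self_iff_true, if_true]
        rw [map_div₀, map_neg, hdiag, map_natCast]
        ring
      · rw [if_neg (Ne.symm hpq), if_neg hpq, map_zero]
        ring

lemma Wm_trace (hn : 2 ≤ n) {X : M n} (htr : X.trace = 0) : (Wm n X).trace = 0 := by
  have hn0 : (n:ℂ) ≠ 0 := Nat.cast_ne_zero.mpr (by omega)
  have hsplit := sum_last_split (fun p => X p p)
  rw [Matrix.trace] at htr
  simp only [Matrix.diag_apply] at htr
  rw [htr] at hsplit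
  have hpt : ∀ p : Fin (n+1), (Wm n X).diag p
      = (if p = Fin.last n then 0 else X p p)
        - (if p = Fin.last n then 0 else -(X (Fin.last n) (Fin.last n))/n) := by
    intro p
    rw [Matrix.diag_apply]
    by_cases hp : p = Fin.last n <;> simp [Wm, hp]
  rw [Matrix.trace, Finset.sum_congr rfl (fun p _ => hpt p), Finset.sum_sub_distrib,
    sum_const_off_last]
  have h2 : ∑ p : Fin (n+1), (if p = Fin.last n then (0:ℂ) else X p p)
      = -(X (Fin.last n) (Fin.last n)) := by linear_combination -hsplit
  rw [h2]
  field_simp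
  ring

lemma ipC_X_Wm (hn : 2 ≤ n) {X : M n} (htr : X.trace = 0) :
    ipC n X (Wm n X) = ipC n (Wm n X) (Wm n X) := by
  have hWtr := Wm_trace hn htr
  rw [ipC_eq, ipC_eq]
  have hpt : ∀ p q, X p q * Wm n X q p
      = (Wm n X p q + (if p = q then -(X (Fin.last n) (Fin.last n))/n else 0))
          * Wm n X q p := by
    intro p q
    by_cases hq : q = Fin.last n
    · subst hq
      rw [(Wm_border X p).2, mul_zero, mul_zero]
    · by_cases hp : p = Fin.last n
      · subst hp
        rw [(Wm_border X q).1, mul_zero, mul_zero]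
      · have hW : Wm n X p q
            = X p q - (if p = q then -(X (Fin.last n) (Fin.last n))/n else 0) := by
          simp only [Wm, Matrix.of_apply, hp, hq, or_self, if_false]
        rw [hW]
        ring
  rw [Finset.sum_congr rfl fun p _ => Finset.sum_congr rfl fun q _ => hpt p q]
  simp only [add_mul]
  rw [Finset.sum_congr rfl (fun p _ => Finset.sum_add_distrib), Finset.sum_add_distrib]
  have h2 : ∀ p, ∑ q, (if p = q then -(X (Fin.last n) (Fin.last n))/n else 0) * Wm n X q p
      = -(X (Fin.last n) (Fin.last n))/n * Wm n X p p := by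
    intro p
    rw [Finset.sum_eq_single p (fun b _ hb => by rw [if_neg (Ne.symm hb), zero_mul]) (by simp)]
    rw [if_pos rfl]
  rw [Finset.sum_congr rfl (fun p _ => h2 p), ← Finset.mul_sum]
  have h3 : ∑ p, Wm n X p p = 0 := by
    rw [show ∑ p, Wm n X p p = (Wm n X).trace from rfl, hWtr]
  rw [h3, mul_zero, add_zero]

/-- If `X` is skew, traceless, has zero border column, and is orthogonal to `Wm X`,
then `X` is the corresponding diagonal matrix. -/
lemma scalar_form (hn : 2 ≤ n) {X : M n} (hXskew : Xᴴ = -X) (htr : X.trace = 0)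
    (hborder : ∀ p, p ≠ Fin.last n → X p (Fin.last n) = 0)
    (hperp : ipC n X (Wm n X) = 0) :
    X = Matrix.diagonal (fun p => if p = Fin.last n then X (Fin.last n) (Fin.last n)
      else -(X (Fin.last n) (Fin.last n))/n) := by
  have hW0 : Wm n X = 0 :=
    eq_zero_of_ipC_self (Wm_conjT hXskew) (by rw [← ipC_X_Wm hn htr, hperp])
  ext p q
  rw [Matrix.diagonal_apply]
  by_cases hp : p = Fin.last n
  · by_cases hq : q = Fin.last n
    · subst hp; subst hq; simp
    · subst hp
      rw [if_neg (fun h => hq h.symm)]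
      rw [skew_apply hXskew q (Fin.last n), hborder q hq]
      simp
  · by_cases hq : q = Fin.last n
    · subst hq
      rw [if_neg hp]
      exact hborder p hp
    · have h := congrFun (congrFun hW0 p) q
      simp only [Wm, Matrix.of_apply, Matrix.zero_apply, hp, hq, or_self, if_false] at h
      by_cases hpq : p = q
      · subst hpq
        rw [if_pos rfl, if_neg hp]
        rw [if_pos rfl] at h
        linear_combination h
      · rw [if_neg hpq]
        rw [if_neg hpq] at h
        linear_combination h



lemma lie_hdiag_eq_zero {W : M n} (hWb : ∀ p, W p (Fin.last n) = 0 ∧ W (Fin.last n) p = 0)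
    {d : Fin (n+1) → ℂ} (hd : ∀ p q, p ≠ Fin.last n → q ≠ Fin.last n → d p = d q) :
    ⁅W, Matrix.diagonal d⁆ = 0 := by
  ext p q
  rw [Ring.lie_def, Matrix.sub_apply, Matrix.mul_diagonal, Matrix.diagonal_mul,
    Matrix.zero_apply]
  by_cases hp : p = Fin.last n
  · subst hp
    rw [(hWb q).2]
    ring
  · by_cases hq : q = Fin.last n
    · subst hq
      rw [(hWb p).1]
      ring
    · rw [hd q p hq hp]
      ring

lemma lie_diagonal_apply (d : Fin (n+1) → ℂ) (Z : M n) (p q : Fin (n+1)) :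
    (⁅Matrix.diagonal d, Z⁆ : M n) p q = (d p - d q) * Z p q := by
  rw [Ring.lie_def, Matrix.sub_apply, Matrix.mul_diagonal, Matrix.diagonal_mul]
  ring

lemma ipC_Dm_perp {W : M n} (hWtr : W.trace = 0)
    (hWb : ∀ p, W p (Fin.last n) = 0 ∧ W (Fin.last n) p = 0) :
    ipC n (Dm n) W = 0 := by
  have h : (Dm n * W).trace = 0 := by
    rw [Dm, Matrix.trace]
    simp only [Matrix.diag_apply, Matrix.diagonal_mul]
    have hpt : ∀ p : Fin (n+1),
        (if p = Fin.last n then -(n:ℂ) * Complex.I else Complex.I) * W p p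
        = (if p = Fin.last n then 0 else Complex.I * W p p) := by
      intro p
      by_cases h : p = Fin.last n
      · subst h
        rw [(hWb (Fin.last n)).1]
        simp
      · simp [h]
    rw [Finset.sum_congr rfl fun p _ => hpt p]
    have hsplit := sum_last_split (fun p => Complex.I * W p p)
    have hIW : ∑ p, Complex.I * W p p = 0 := by
      rw [← Finset.mul_sum]
      rw [show ∑ p, W p p = W.trace from rfl, hWtr, mul_zero]
    rw [hIW, (hWb (Fin.last n)).1, mul_zero] at hsplit
    linear_combination -hsplit
  rw [ipC, h]
  simp

lemma Bp_conjT (c : ℝ) {B : M n} (hBskew : Bᴴ = -B)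
    (hBcorner : B (Fin.last n) (Fin.last n) = 0) : (Bp n c B)ᴴ = -(Bp n c B) := by
  have hqp : ∀ p q : Fin (n+1), (starRingEnd ℂ) (B q p) = -(B p q) := by
    intro p q
    rw [skew_apply hBskew p q]
    simp
  ext p q
  rw [Matrix.conjTranspose_apply, Matrix.neg_apply]
  by_cases hp : p = Fin.last n <;> by_cases hq : q = Fin.last n <;>
    simp [Bp, hp, hq, hBcorner, _root_.map_mul, map_div₀, Complex.conj_I,
      Complex.conj_ofReal, hqp] <;> ring

lemma Bp_trace (c : ℝ) {B : M n} (hBcorner : B (Fin.last n) (Fin.last n) = 0) :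
    (Bp n c B).trace = 0 := by
  rw [Matrix.trace]
  apply Finset.sum_eq_zero
  intro p _
  rw [Matrix.diag_apply]
  by_cases hp : p = Fin.last n
  · subst hp
    simp [Bp, hBcorner]
  · simp [Bp, hp]

lemma border_eq_zero {B : M n} (hBskew : Bᴴ = -B)
    (hBoff : ∀ p q, p ≠ Fin.last n → q ≠ Fin.last n → B p q = 0)
    (hs : (∑ r, Complex.normSq (B r (Fin.last n))) = 0) : B = 0 := by
  have hcol : ∀ r, B r (Fin.last n) = 0 := by
    intro r
    have h := (Finset.sum_eq_zero_iff_of_nonneg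
      (fun r _ => Complex.normSq_nonneg (B r (Fin.last n)))).mp hs r (Finset.mem_univ r)
    exact Complex.normSq_eq_zero.mp h
  ext p q
  by_cases hq : q = Fin.last n
  · subst hq
    rw [hcol p, Matrix.zero_apply]
  · by_cases hp : p = Fin.last n
    · subst hp
      rw [skew_apply hBskew q (Fin.last n), hcol q, Matrix.zero_apply, map_zero, neg_zero]
    · rw [hBoff p q hp hq, Matrix.zero_apply]

lemma alpha_lie_zero {𝔥 𝔪 : Submodule ℝ (M n)} (hn : 2 ≤ n)
    (h𝔥 : ∀ W, W ∈ 𝔥 ↔ (Wᴴ = -W ∧ W.trace = 0 ∧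
      ∀ p : Fin (n+1), W p (Fin.last n) = 0 ∧ W (Fin.last n) p = 0))
    (h𝔪 : ∀ A, A ∈ 𝔪 ↔ (Aᴴ = -A ∧ A.trace = 0 ∧ ∀ W ∈ 𝔥, ipC n A W = 0))
    (α : M n →ₗ[ℝ] M n →ₗ[ℝ] ℝ)
    (hinv : ∀ w ∈ 𝔥, ∀ u ∈ 𝔪, ∀ v ∈ 𝔪, α ⁅w, u⁆ v + α u ⁅w, v⁆ = 0)
    {B : M n} (hBskew : Bᴴ = -B)
    (hBoff : ∀ p q, p ≠ Fin.last n → q ≠ Fin.last n → B p q = 0)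
    (hBcorner : B (Fin.last n) (Fin.last n) = 0)
    {u : M n} (hu𝔪 : u ∈ 𝔪) (hucomm : ∀ w ∈ 𝔥, ⁅w, u⁆ = 0) :
    α B u = 0 := by
  by_cases hs : (∑ r, Complex.normSq (B r (Fin.last n))) = 0
  · rw [border_eq_zero hBskew hBoff hs]
    simp
  · have hvl : (fun p => B p (Fin.last n)) (Fin.last n) = 0 := hBcorner
    have hw𝔥 : wB n (fun p => B p (Fin.last n)) ∈ 𝔥 :=
      (h𝔥 _).mpr ⟨wB_conjT _, wB_trace hn _,
        fun p => ⟨wB_col_last (fun r => B r (Fin.last n)) hvl p, wB_row_last (fun r => B r (Fin.last n)) hvl p⟩⟩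
    have hB'𝔪 : Bp n ((∑ r, Complex.normSq (B r (Fin.last n))) * ((n:ℝ)-1) / n) B ∈ 𝔪 :=
      (h𝔪 _).mpr ⟨Bp_conjT _ hBskew hBcorner, Bp_trace _ hBcorner,
        fun W hW => ipC_zero_of_offdiag (fun p q hp hq => Bp_off _ B hp hq)
          (((h𝔥 W).mp hW).2.2)⟩
    have hlie := lie_wB_Bp hn hBskew hBoff hBcorner hs
    have h := hinv _ hw𝔥 _ hB'𝔪 u hu𝔪
    rw [hlie, hucomm _ hw𝔥] at h
    simpa using h

lemma border_zero_of_comm (hn : 2 ≤ n) {X : M n}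
    (hcomm : ⁅wB n (fun p => if p = Fin.last n then 0 else X p (Fin.last n)), X⁆ = 0) :
    ∀ p, p ≠ Fin.last n → X p (Fin.last n) = 0 := by
  have hn0 : (n:ℝ) ≠ 0 := Nat.cast_ne_zero.mpr (by omega)
  set l := Fin.last n with hl
  set v : Fin (n+1) → ℂ := fun p => if p = l then 0 else X p l with hv
  have hvl : v l = 0 := if_pos rfl
  set s : ℝ := ∑ r, Complex.normSq (v r) with hsdef
  have key : ∀ p, p ≠ l → Complex.I * (s:ℂ) * v p - Complex.I * (s:ℂ)/n * v p = 0 := by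
    intro p hp
    have h0 := congrFun (congrFun hcomm p) l
    rw [Ring.lie_def, Matrix.sub_apply, Matrix.mul_apply, Matrix.mul_apply,
      Matrix.zero_apply] at h0
    have h2 : ∑ r, X p r * wB n v r l = 0 :=
      Finset.sum_eq_zero fun r _ => by rw [wB_col_last v hvl r, mul_zero]
    have h1 : ∀ r, wB n v p r * X r l = wB n v p r * v r := by
      intro r
      by_cases hr : r = l
      · subst hr
        rw [wB_col_last v hvl p, zero_mul, zero_mul]
      · rw [hv]
        simp only [if_neg hr]
    rw [h2, sub_zero, Finset.sum_congr rfl (fun r _ => h1 r), wB_mul_v v hp, ← hsdef] at h0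
    exact h0
  by_cases hs : s = 0
  · intro p hp
    have h := (Finset.sum_eq_zero_iff_of_nonneg
      (fun r _ => Complex.normSq_nonneg (v r))).mp hs p (Finset.mem_univ p)
    have h2 : v p = 0 := Complex.normSq_eq_zero.mp h
    have h3 : (if p = l then (0:ℂ) else X p l) = 0 := h2
    rwa [if_neg hp] at h3
  · exfalso
    have hc0 : (s:ℂ) - (s:ℂ)/n ≠ 0 := by
      have hn1 : (n:ℝ) - 1 ≠ 0 := by
        have : (2:ℝ) ≤ n := by exact_mod_cast hn
        linarith
      have hn0C : (n:ℂ) ≠ 0 := Nat.cast_ne_zero.mpr (by omega)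
      have : ((s:ℝ):ℂ) - ((s:ℝ):ℂ)/n = (((s * ((n:ℝ)-1)/n : ℝ)):ℂ) := by
        push_cast
        field_simp
      rw [this]
      exact Complex.ofReal_ne_zero.mpr (div_ne_zero (mul_ne_zero hs hn1) hn0)
    have hv0 : ∀ p, v p = 0 := by
      intro p
      by_cases hp : p = l
      · rw [hp]; exact hvl
      · have h := key p hp
        have h2 : v p * (Complex.I * ((s:ℂ) - (s:ℂ)/n)) = 0 := by linear_combination h
        rcases mul_eq_zero.mp h2 with h3 | h3
        · exact h3
        · exact absurd h3 (mul_ne_zero Complex.I_ne_zero hc0)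
    apply hs
    rw [hsdef]
    apply Finset.sum_eq_zero
    intro r _
    rw [hv0 r]
    simp


end RAux

open RAux

/-- **Randers equigeodesic vectors for the sphere `S^{2n+1} = SU(n+1)/SU(n)`, `n ≥ 2`.**
Here `𝔤 = su(n+1)` with the commutator bracket and the invariant inner product
`⟨A,B⟩ = −Re(tr(A·B))`, `𝔥 = su(n)` embedded in the upper-left block, `𝔪 = 𝔥ᗮ`
(inside `𝔤`), and `𝔪₀` the fixed-point set of `ad 𝔥` on `𝔪`.  The set of Randers
equigeodesic vectors contained in `𝔪` is exactly `𝔪₀ \ {0}`. -/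

theorem randers_equigeodesic_vectors_of_su_n_plus_one_quotient_su_n
    (n : ℕ) (hn : 2 ≤ n)
    (𝔥 : Submodule ℝ (Matrix (Fin (n + 1)) (Fin (n + 1)) ℂ))
    (h𝔥 : ∀ W, W ∈ 𝔥 ↔
      (Wᴴ = -W ∧ W.trace = 0 ∧
        ∀ p : Fin (n + 1), W p (Fin.last n) = 0 ∧ W (Fin.last n) p = 0))
    (𝔪 : Submodule ℝ (Matrix (Fin (n + 1)) (Fin (n + 1)) ℂ))
    (h𝔪 : ∀ A, A ∈ 𝔪 ↔ (Aᴴ = -A ∧ A.trace = 0 ∧ ∀ W ∈ 𝔥, ipC n A W = 0))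
    (𝔪₀ : Submodule ℝ (Matrix (Fin (n + 1)) (Fin (n + 1)) ℂ))
    (h𝔪₀ : ∀ v, v ∈ 𝔪₀ ↔ (v ∈ 𝔪 ∧ ∀ w ∈ 𝔥, ⁅w, v⁆ = 0))
    (pr : Matrix (Fin (n + 1)) (Fin (n + 1)) ℂ →ₗ[ℝ] Matrix (Fin (n + 1)) (Fin (n + 1)) ℂ)
    (hpr : ∀ A : Matrix (Fin (n + 1)) (Fin (n + 1)) ℂ,
      Aᴴ = -A → A.trace = 0 → pr A ∈ 𝔪 ∧ A - pr A ∈ 𝔥) :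
    ∀ X : Matrix (Fin (n + 1)) (Fin (n + 1)) ℂ,
      (X ∈ 𝔪 ∧ X ≠ 0 ∧ IsRandersEquigeodesicVector 𝔥 𝔪 𝔪₀ pr X) ↔
        (X ∈ 𝔪₀ ∧ X ≠ 0) := by
  intro X
  constructor
  · rintro ⟨hX𝔪, hX0, hreg⟩
    refine ⟨?_, hX0⟩
    obtain ⟨hXskew, hXtr, hXperp⟩ := (h𝔪 X).mp hX𝔪
    have inv0 : IsInvariantInnerOn 𝔥 𝔪 (alpha0 n) := by
      refine ⟨fun u _ v _ => ipC_symm u v, fun u hu hune => ?_, fun w _ u _ v _ =>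
        ipC_invariant w u v⟩
      have huskew := ((h𝔪 u).mp hu).1
      rcases lt_or_eq_of_le (ipC_self_nonneg huskew) with h | h
      · exact h
      · exact absurd (eq_zero_of_ipC_self huskew h.symm) hune
    have hDm𝔪 : Dm n ∈ 𝔪 :=
      (h𝔪 _).mpr ⟨Dm_conjT, Dm_trace,
        fun W hW => ipC_Dm_perp ((h𝔥 W).mp hW).2.1 ((h𝔥 W).mp hW).2.2⟩
    have hDm𝔪₀ : Dm n ∈ 𝔪₀ :=
      (h𝔪₀ _).mpr ⟨hDm𝔪, fun w hw => lie_hdiag_eq_zero ((h𝔥 w).mp hw).2.2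
        (fun p q hp hq => by rw [if_neg hp, if_neg hq])⟩
    have hXXpos : 0 < ipC n X X := by
      rcases lt_or_eq_of_le (ipC_self_nonneg hXskew) with h | h
      · exact h
      · exact absurd (eq_zero_of_ipC_self hXskew h.symm) hX0
    set c : ℝ := 1 / (Real.sqrt (ipC n (Dm n) (Dm n)) + 1) with hcdef
    have hDD := ipC_self_nonneg (Dm_conjT (n := n))
    have hsn := Real.sqrt_nonneg (ipC n (Dm n) (Dm n))
    have hcpos : 0 < c := by
      rw [hcdef]
      positivity
    have hlt : (alpha0 n) (c • Dm n) (c • Dm n) < 1 := by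
      have hsm : (alpha0 n) (c • Dm n) (c • Dm n)
          = c * (c * ipC n (Dm n) (Dm n)) := by
        simp only [_root_.map_smul, LinearMap.smul_apply, smul_eq_mul, alpha0_apply]
        try ring
      rw [hsm]
      have hsq := Real.sq_sqrt hDD
      have heq : c * (c * ipC n (Dm n) (Dm n))
          = ipC n (Dm n) (Dm n) /
            ((Real.sqrt (ipC n (Dm n) (Dm n)) + 1) * (Real.sqrt (ipC n (Dm n) (Dm n)) + 1)) := by
        rw [hcdef]
        field_simp
      rw [heq, div_lt_one (by positivity)]
      nlinarith [hsq, hsn]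
    have key : ∀ Z ∈ 𝔪, ipC n ⁅X, Z⁆ (Dm n) = 0 := by
      intro Z hZ
      have hZskew := ((h𝔪 Z).mp hZ).1
      have hYskew : (⁅X,Z⁆ : Matrix (Fin (n+1)) (Fin (n+1)) ℂ)ᴴ = -⁅X,Z⁆ :=
        lie_conjT hXskew hZskew
      have hYtr := trace_lie X Z
      obtain ⟨hprm, hprh⟩ := hpr _ hYskew hYtr
      have h00 : (alpha0 n) (0 : Matrix (Fin (n+1)) (Fin (n+1)) ℂ) 0 < 1 := by
        have hz : (alpha0 n) (0 : Matrix (Fin (n+1)) (Fin (n+1)) ℂ) 0 = 0 := by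
          simp
        rw [hz]
        norm_num
      have h1 := hreg (alpha0 n) inv0 0 (Submodule.zero_mem _) h00 Z hZ
      rw [map_zero, mul_zero, add_zero] at h1
      have h2 := hreg (alpha0 n) inv0 (c • Dm n) (Submodule.smul_mem _ c hDm𝔪₀) hlt Z hZ
      rw [h1, zero_add, LinearMap.map_smul, smul_eq_mul] at h2
      have hsq0 : Real.sqrt ((alpha0 n) X X) ≠ 0 := ne_of_gt (Real.sqrt_pos.mpr hXXpos)
      have h3 : (alpha0 n) (pr ⁅X,Z⁆) (Dm n) = 0 := by
        rcases mul_eq_zero.mp h2 with h | h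
        · exact absurd h hsq0
        · rcases mul_eq_zero.mp h with h' | h'
          · exact absurd h' (ne_of_gt hcpos)
          · exact h'
      have hsum : pr ⁅X,Z⁆ + (⁅X,Z⁆ - pr ⁅X,Z⁆) = ⁅X,Z⁆ := by abel
      have h4 : (alpha0 n) (pr ⁅X,Z⁆ + (⁅X,Z⁆ - pr ⁅X,Z⁆)) (Dm n)
          = (alpha0 n) (pr ⁅X,Z⁆) (Dm n) + (alpha0 n) (⁅X,Z⁆ - pr ⁅X,Z⁆) (Dm n) := by
        rw [map_add, LinearMap.add_apply]
      rw [hsum] at h4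
      have h5 : (alpha0 n) (⁅X,Z⁆ - pr ⁅X,Z⁆) (Dm n) = 0 := by
        rw [alpha0_apply, ipC_symm]
        exact ((h𝔪 _).mp hDm𝔪).2.2 _ hprh
      rw [h3, h5, add_zero] at h4
      exact h4
    have hBb𝔪 : ⁅Dm n, X⁆ ∈ 𝔪 := by
      refine (h𝔪 _).mpr ⟨lie_conjT Dm_conjT hXskew, trace_lie _ _, fun W hW => ?_⟩
      rw [ipC_lie]
      have hzero : (⁅W, Dm n⁆ : Matrix (Fin (n+1)) (Fin (n+1)) ℂ) = 0 :=
        lie_hdiag_eq_zero ((h𝔥 W).mp hW).2.2 (fun p q hp hq => by rw [if_neg hp, if_neg hq])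
      rw [hzero]
      exact ipC_zero_right X
    have hBb0 : (⁅Dm n, X⁆ : Matrix (Fin (n+1)) (Fin (n+1)) ℂ) = 0 := by
      apply eq_zero_of_ipC_self (lie_conjT Dm_conjT hXskew)
      have h := key ⁅Dm n, X⁆ hBb𝔪
      rw [ipC_lie] at h
      exact h
    have hborder : ∀ p, p ≠ Fin.last n → X p (Fin.last n) = 0 := by
      intro p hp
      have h := congrFun (congrFun hBb0 p) (Fin.last n)
      rw [Matrix.zero_apply] at h
      rw [show (⁅Dm n, X⁆ : Matrix (Fin (n+1)) (Fin (n+1)) ℂ) p (Fin.last n)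
          = ((if p = Fin.last n then -(n:ℂ) * Complex.I else Complex.I)
            - (if Fin.last n = Fin.last n then -(n:ℂ) * Complex.I else Complex.I))
              * X p (Fin.last n) from lie_diagonal_apply _ X p (Fin.last n)] at h
      rw [if_neg hp, if_pos rfl] at h
      rcases mul_eq_zero.mp h with h2 | h2
      · exfalso
        have h3 : Complex.I - -(n:ℂ) * Complex.I = ((n:ℂ) + 1) * Complex.I := by ring
        rw [h3] at h2
        have h4 : ((n:ℂ) + 1) ≠ 0 := by
          have h5 : ((n + 1 : ℕ) : ℂ) ≠ 0 := Nat.cast_ne_zero.mpr (Nat.succ_ne_zero n)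
          push_cast at h5
          exact h5
        exact (mul_ne_zero h4 Complex.I_ne_zero) h2
      · exact h2
    have hWm𝔥 : Wm n X ∈ 𝔥 :=
      (h𝔥 _).mpr ⟨Wm_conjT hXskew, Wm_trace hn hXtr, Wm_border X⟩
    have hXdiag := scalar_form hn hXskew hXtr hborder (hXperp _ hWm𝔥)
    refine (h𝔪₀ X).mpr ⟨hX𝔪, fun w hw => ?_⟩
    rw [hXdiag]
    exact lie_hdiag_eq_zero ((h𝔥 w).mp hw).2.2 (fun p q hp hq => by rw [if_neg hp, if_neg hq])
  · rintro ⟨hX𝔪₀, hX0⟩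
    obtain ⟨hX𝔪, hXcomm⟩ := (h𝔪₀ X).mp hX𝔪₀
    refine ⟨hX𝔪, hX0, ?_⟩
    intro α hα u hu _ Z hZ
    obtain ⟨hsym, hposd, hinv⟩ := hα
    obtain ⟨hXskew, hXtr, hXperp⟩ := (h𝔪 X).mp hX𝔪
    obtain ⟨hZskew, hZtr, _⟩ := (h𝔪 Z).mp hZ
    have hwmem : wB n (fun p => if p = Fin.last n then 0 else X p (Fin.last n)) ∈ 𝔥 :=
      (h𝔥 _).mpr ⟨wB_conjT _, wB_trace hn _,
        fun p => ⟨wB_col_last _ (if_pos rfl) p, wB_row_last _ (if_pos rfl) p⟩⟩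
    have hborder := border_zero_of_comm hn (hXcomm _ hwmem)
    have hWm𝔥 : Wm n X ∈ 𝔥 :=
      (h𝔥 _).mpr ⟨Wm_conjT hXskew, Wm_trace hn hXtr, Wm_border X⟩
    have hXdiag := scalar_form hn hXskew hXtr hborder (hXperp _ hWm𝔥)
    have hYskew : (⁅X,Z⁆ : Matrix (Fin (n+1)) (Fin (n+1)) ℂ)ᴴ = -⁅X,Z⁆ :=
      lie_conjT hXskew hZskew
    have hY𝔪 : ⁅X,Z⁆ ∈ 𝔪 := by
      refine (h𝔪 _).mpr ⟨hYskew, trace_lie _ _, fun W hW => ?_⟩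
      rw [ipC_lie, hXcomm W hW]
      exact ipC_zero_right Z
    have hprY : pr ⁅X,Z⁆ = ⁅X,Z⁆ := by
      obtain ⟨hpm, hph⟩ := hpr _ hYskew (trace_lie X Z)
      have hd𝔪 : ⁅X,Z⁆ - pr ⁅X,Z⁆ ∈ 𝔪 := Submodule.sub_mem _ hY𝔪 hpm
      have hz : ⁅X,Z⁆ - pr ⁅X,Z⁆ = 0 := by
        apply eq_zero_of_ipC_self ((h𝔪 _).mp hd𝔪).1
        exact ((h𝔪 _).mp hd𝔪).2.2 _ hph
      exact (sub_eq_zero.mp hz).symm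
    have hYoff : ∀ p q, p ≠ Fin.last n → q ≠ Fin.last n →
        (⁅X,Z⁆ : Matrix (Fin (n+1)) (Fin (n+1)) ℂ) p q = 0 := by
      intro p q hp hq
      rw [hXdiag, lie_diagonal_apply, if_neg hp, if_neg hq, sub_self, zero_mul]
    have hYcorner : (⁅X,Z⁆ : Matrix (Fin (n+1)) (Fin (n+1)) ℂ)
        (Fin.last n) (Fin.last n) = 0 := by
      rw [hXdiag, lie_diagonal_apply, sub_self, zero_mul]
    have e1 : α ⁅X,Z⁆ X = 0 :=
      alpha_lie_zero hn h𝔥 h𝔪 α hinv hYskew hYoff hYcorner hX𝔪 hXcomm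
    have e2 : α ⁅X,Z⁆ u = 0 := by
      obtain ⟨hu𝔪, hucomm⟩ := (h𝔪₀ u).mp hu
      exact alpha_lie_zero hn h𝔥 h𝔪 α hinv hYskew hYoff hYcorner hu𝔪 hucomm
    rw [hprY, e1, e2, mul_zero, add_zero]
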